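/- arXiv:2507.06772 — 2 statements merged into one kernel-verified Lean document; each statement's English description precedes it below -/
import Mathlib

section
/- Let F : ℝⁿ → ℝᵐ be differentiable with Jacobian J, and suppose ‖J(y) − J(z)‖ ≤ κ_lj‖y − z‖, ‖J(y)‖ ≤ κ_lf and ‖F(y)‖ ≤ κ_bf for all y, z ∈ ℝⁿ. Let x ∈ ℝⁿ, θ > 0, and let J_m ∈ ℝ^{m×n} satisfy ‖J_m‖ ≤ κ_bmj and ‖J_m − J(x)‖ ≤ κ_ej/θ. Then for every d ∈ ℝⁿ, |‖F(x) + J_m d‖² − ‖F(x + d)‖²| ≤ (κ_lj κ_bf + κ_lf²)‖d‖² + 2κ_bf κ_ej θ⁻¹‖d‖ + κ_bmj²‖d‖². -/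
open Filter Matrix MeasureTheory

/-- The map `x ↦ A x` from `ℝⁿ` to `ℝᵖ` with the Euclidean (`ℓ²`) structure. -/
noncomputable def mulVecE {p n : ℕ} (A : Matrix (Fin p) (Fin n) ℝ)
    (x : EuclideanSpace ℝ (Fin n)) : EuclideanSpace ℝ (Fin p) :=
  (WithLp.equiv 2 (Fin p → ℝ)).symm (A.mulVec ((WithLp.equiv 2 (Fin n → ℝ)) x))

/-- The spectral norm (ℓ²-operator norm) of a matrix. -/
noncomputable def opNorm {p n : ℕ} (A : Matrix (Fin p) (Fin n) ℝ) : ℝ :=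
  sSup {r : ℝ | ∃ x : EuclideanSpace ℝ (Fin n), ‖x‖ ≤ 1 ∧ r = ‖mulVecE A x‖}

/-- A matrix as a continuous linear map between Euclidean spaces. -/
noncomputable def jacCLM {p n : ℕ} (A : Matrix (Fin p) (Fin n) ℝ) :
    EuclideanSpace ℝ (Fin n) →L[ℝ] EuclideanSpace ℝ (Fin p) :=
  LinearMap.toContinuousLinearMap (Matrix.toEuclideanLin A)

lemma jacCLM_apply {p n : ℕ} (A : Matrix (Fin p) (Fin n) ℝ) (v : EuclideanSpace ℝ (Fin n)) :
    jacCLM A v = mulVecE A v := rfl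

lemma opNorm_bddAbove {p n : ℕ} (A : Matrix (Fin p) (Fin n) ℝ) :
    BddAbove {r : ℝ | ∃ x : EuclideanSpace ℝ (Fin n), ‖x‖ ≤ 1 ∧ r = ‖mulVecE A x‖} := by
  refine ⟨‖jacCLM A‖, ?_⟩
  rintro r ⟨x, hx, rfl⟩
  rw [← jacCLM_apply]
  calc ‖jacCLM A x‖ ≤ ‖jacCLM A‖ * ‖x‖ := (jacCLM A).le_opNorm x
    _ ≤ ‖jacCLM A‖ * 1 := by gcongr
    _ = ‖jacCLM A‖ := mul_one _

lemma opNorm_nonneg' {p n : ℕ} (A : Matrix (Fin p) (Fin n) ℝ) : 0 ≤ opNorm A := by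
  have h0 : (0:ℝ) ∈ {r : ℝ | ∃ x : EuclideanSpace ℝ (Fin n), ‖x‖ ≤ 1 ∧ r = ‖mulVecE A x‖} := by
    refine ⟨0, by simp, ?_⟩
    rw [← jacCLM_apply]; simp
  exact le_csSup (opNorm_bddAbove A) h0

lemma mulVecE_norm_le {p n : ℕ} (A : Matrix (Fin p) (Fin n) ℝ) {c : ℝ} (h : opNorm A ≤ c)
    (v : EuclideanSpace ℝ (Fin n)) : ‖mulVecE A v‖ ≤ c * ‖v‖ := by
  rcases eq_or_ne v 0 with rfl | hv
  · rw [← jacCLM_apply]; simp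
  · have hvn : 0 < ‖v‖ := norm_pos_iff.mpr hv
    have hu : ‖(‖v‖⁻¹ • v : EuclideanSpace ℝ (Fin n))‖ ≤ 1 := by
      rw [norm_smul, norm_inv, norm_norm, inv_mul_cancel₀ hvn.ne']
    have hmem : ‖mulVecE A (‖v‖⁻¹ • v)‖ ∈
        {r : ℝ | ∃ x : EuclideanSpace ℝ (Fin n), ‖x‖ ≤ 1 ∧ r = ‖mulVecE A x‖} :=
      ⟨_, hu, rfl⟩
    have hle : ‖mulVecE A (‖v‖⁻¹ • v)‖ ≤ c := le_trans (le_csSup (opNorm_bddAbove A) hmem) h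
    have heq : mulVecE A (‖v‖⁻¹ • v) = ‖v‖⁻¹ • mulVecE A v := by
      rw [← jacCLM_apply, ← jacCLM_apply]
      exact (jacCLM A).map_smul _ _
    rw [heq, norm_smul, norm_inv, norm_norm] at hle
    calc ‖mulVecE A v‖ = ‖v‖ * (‖v‖⁻¹ * ‖mulVecE A v‖) := by field_simp
      _ ≤ ‖v‖ * c := by gcongr
      _ = c * ‖v‖ := mul_comm _ _

lemma mulVecE_sub {p n : ℕ} (A B : Matrix (Fin p) (Fin n) ℝ) (v : EuclideanSpace ℝ (Fin n)) :
    mulVecE (A - B) v = mulVecE A v - mulVecE B v := by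
  simp [mulVecE, Matrix.sub_mulVec]

lemma taylor_half (h h' : ℝ → ℝ) (hd : ∀ t, HasDerivAt h (h' t) t) (C : ℝ)
    (hb : ∀ t ∈ Set.Icc (0:ℝ) 1, h' t - h' 0 ≤ 2 * t * C) :
    h 1 - h 0 - h' 0 ≤ C := by
  set ψ : ℝ → ℝ := fun t => C * t ^ 2 + t * h' 0 - h t with hψdef
  have hψ : ∀ t, HasDerivAt ψ (C * (2 * t) + h' 0 - h' t) t := by
    intro t
    have h1 : HasDerivAt (fun t : ℝ => C * t ^ 2) (C * (2 * t)) t := by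
      simpa using (hasDerivAt_pow 2 t).const_mul C
    have h2 : HasDerivAt (fun t : ℝ => t * h' 0) (h' 0) t := by
      simpa using (hasDerivAt_id t).mul_const (h' 0)
    exact (h1.add h2).sub (hd t)
  have hmono : MonotoneOn ψ (Set.Icc (0:ℝ) 1) := by
    apply monotoneOn_of_deriv_nonneg (convex_Icc 0 1)
    · exact fun t _ => (hψ t).continuousAt.continuousWithinAt
    · exact fun t _ => ((hψ t).differentiableAt).differentiableWithinAt
    · intro t ht
      rw [interior_Icc] at ht
      rw [(hψ t).deriv]
      have := hb t ⟨ht.1.le, ht.2.le⟩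
      linarith
  have h01 : ψ 0 ≤ ψ 1 := hmono (by norm_num) (by norm_num) (by norm_num)
  simp only [hψdef] at h01
  nlinarith [h01]

lemma taylor_aux (h h' : ℝ → ℝ) (hd : ∀ t, HasDerivAt h (h' t) t) (C : ℝ)
    (hb : ∀ t ∈ Set.Icc (0:ℝ) 1, |h' t - h' 0| ≤ 2 * t * C) :
    |h 1 - h 0 - h' 0| ≤ C := by
  rw [abs_le]
  constructor
  · have := taylor_half (fun t => -h t) (fun t => -h' t)
      (fun t => (hd t).neg) C (fun t ht => by
        have := abs_le.mp (hb t ht)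
        linarith)
    linarith
  · exact taylor_half h h' hd C (fun t ht => (abs_le.mp (hb t ht)).2)

/-- Model error bound: for a first-order accurate Jacobian model `Jm`,
`|‖F(x) + Jm d‖² − ‖F(x+d)‖²|` is bounded by
`(κlj κbf + κlf²)‖d‖² + 2 κbf κej θ⁻¹ ‖d‖ + κbmj² ‖d‖²`. -/
theorem model_error_bound {n m : ℕ}
    (F : EuclideanSpace ℝ (Fin n) → EuclideanSpace ℝ (Fin m))
    (J : EuclideanSpace ℝ (Fin n) → Matrix (Fin m) (Fin n) ℝ)
    (hF : ∀ z, HasFDerivAt F (jacCLM (J z)) z)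
    (κlj κlf κbf : ℝ)
    (hJlip : ∀ y z, opNorm (J y - J z) ≤ κlj * ‖y - z‖)
    (hJb : ∀ y, opNorm (J y) ≤ κlf)
    (hFb : ∀ y, ‖F y‖ ≤ κbf)
    (x : EuclideanSpace ℝ (Fin n)) (θ : ℝ) (hθ : 0 < θ)
    (Jm : Matrix (Fin m) (Fin n) ℝ) (κbmj κej : ℝ)
    (hJmb : opNorm Jm ≤ κbmj)
    (hJmacc : opNorm (Jm - J x) ≤ κej / θ) :
    ∀ d : EuclideanSpace ℝ (Fin n),
      |‖F x + mulVecE Jm d‖ ^ 2 - ‖F (x + d)‖ ^ 2| ≤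
        (κlj * κbf + κlf ^ 2) * ‖d‖ ^ 2 + 2 * κbf * κej * θ⁻¹ * ‖d‖ +
          κbmj ^ 2 * ‖d‖ ^ 2 := by
  intro d
  have hκbf : 0 ≤ κbf := le_trans (norm_nonneg _) (hFb x)
  have hκlf : 0 ≤ κlf := le_trans (opNorm_nonneg' _) (hJb x)
  have hκbmj : 0 ≤ κbmj := le_trans (opNorm_nonneg' _) hJmb
  -- Lipschitz bound for F
  have hJnorm : ∀ z, ‖jacCLM (J z)‖ ≤ κlf := fun z =>
    ContinuousLinearMap.opNorm_le_bound _ hκlf (fun v => by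
      rw [jacCLM_apply]; exact mulVecE_norm_le _ (hJb z) v)
  have hFlip : ∀ y z : EuclideanSpace ℝ (Fin n), ‖F y - F z‖ ≤ κlf * ‖y - z‖ := by
    intro y z
    exact Convex.norm_image_sub_le_of_norm_hasFDerivWithin_le
      (fun w _ => (hF w).hasFDerivWithinAt) (fun w _ => hJnorm w) convex_univ
      (Set.mem_univ z) (Set.mem_univ y)
  -- the path and derivatives
  have hFc : ∀ t : ℝ, HasDerivAt (fun s : ℝ => F (x + s • d))
      (mulVecE (J (x + t • d)) d) t := by
    intro t
    have hp : HasDerivAt (fun s : ℝ => x + s • d) d t := by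
      simpa using ((hasDerivAt_id t).smul_const d).const_add x
    have := (hF (x + t • d)).comp_hasDerivAt t hp
    exact this
  set g' : ℝ → ℝ := fun t =>
    2 * inner ℝ (F (x + t • d)) (mulVecE (J (x + t • d)) d) with hg'def
  have hg : ∀ t : ℝ, HasDerivAt (fun s : ℝ => ‖F (x + s • d)‖ ^ 2) (g' t) t := by
    intro t
    have := (hFc t).inner ℝ (hFc t)
    have heq : (fun s : ℝ => (inner ℝ (F (x + s • d)) (F (x + s • d)) : ℝ))
        = fun s : ℝ => ‖F (x + s • d)‖ ^ 2 := by
      funext s; exact real_inner_self_eq_norm_sq _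
    rw [heq] at this
    refine HasDerivAt.congr_deriv this ?_
    rw [hg'def]
    simp only
    rw [real_inner_comm (F (x + t • d)) (mulVecE (J (x + t • d)) d)]
    ring
  set C : ℝ := (κlj * κbf + κlf ^ 2) * ‖d‖ ^ 2 with hCdef
  -- bound on derivative differences
  have hkey : ∀ t ∈ Set.Icc (0:ℝ) 1, |g' t - g' 0| ≤ 2 * t * C := by
    intro t ht
    have ht0 : 0 ≤ t := ht.1
    have h0 : (x + (0:ℝ) • d) = x := by simp
    have hdiff : g' t - g' 0 =
        2 * (inner ℝ (F (x + t • d) - F x) (mulVecE (J (x + t • d)) d)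
          + inner ℝ (F x) (mulVecE (J (x + t • d) - J x) d) : ℝ) := by
      rw [hg'def]
      simp only [h0, mulVecE_sub, inner_sub_left, inner_sub_right]
      ring
    have hnt : ‖(x + t • d) - x‖ = t * ‖d‖ := by
      simp [norm_smul, abs_of_nonneg ht0]
    have e1 : |(inner ℝ (F (x + t • d) - F x) (mulVecE (J (x + t • d)) d) : ℝ)|
        ≤ (κlf * (t * ‖d‖)) * (κlf * ‖d‖) := by
      calc |(inner ℝ (F (x + t • d) - F x) (mulVecE (J (x + t • d)) d) : ℝ)|
          ≤ ‖F (x + t • d) - F x‖ * ‖mulVecE (J (x + t • d)) d‖ := abs_real_inner_le_norm _ _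
        _ ≤ (κlf * (t * ‖d‖)) * (κlf * ‖d‖) := by
            apply mul_le_mul
            · rw [← hnt]; exact hFlip _ _
            · exact mulVecE_norm_le _ (hJb _) d
            · exact norm_nonneg _
            · positivity
    have e2 : |(inner ℝ (F x) (mulVecE (J (x + t • d) - J x) d) : ℝ)|
        ≤ κbf * (κlj * (t * ‖d‖) * ‖d‖) := by
      calc |(inner ℝ (F x) (mulVecE (J (x + t • d) - J x) d) : ℝ)|
          ≤ ‖F x‖ * ‖mulVecE (J (x + t • d) - J x) d‖ := abs_real_inner_le_norm _ _
        _ ≤ κbf * (κlj * (t * ‖d‖) * ‖d‖) := by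
            apply mul_le_mul (hFb x)
            · have := mulVecE_norm_le (J (x + t • d) - J x)
                (le_trans (hJlip (x + t • d) x) (le_of_eq (by rw [hnt]))) d
              exact this
            · exact norm_nonneg _
            · exact hκbf
    rw [hdiff, hCdef]
    rw [abs_mul]
    have := abs_add_le (inner ℝ (F (x + t • d) - F x) (mulVecE (J (x + t • d)) d) : ℝ)
      (inner ℝ (F x) (mulVecE (J (x + t • d) - J x) d) : ℝ)
    rw [abs_two]
    nlinarith [abs_nonneg (inner ℝ (F (x + t • d) - F x) (mulVecE (J (x + t • d)) d) : ℝ)]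
  -- Taylor estimate
  have hT : |‖F (x + d)‖ ^ 2 - ‖F x‖ ^ 2 - g' 0| ≤ C := by
    have := taylor_aux (fun s : ℝ => ‖F (x + s • d)‖ ^ 2) g' hg C hkey
    simpa using this
  -- expansion of the model term
  have hexp : ‖F x + mulVecE Jm d‖ ^ 2
      = ‖F x‖ ^ 2 + 2 * inner ℝ (F x) (mulVecE Jm d) + ‖mulVecE Jm d‖ ^ 2 :=
    norm_add_sq_real _ _
  have hg'0 : g' 0 = 2 * inner ℝ (F x) (mulVecE (J x) d) := by
    rw [hg'def]; simp
  -- bound the model part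
  have hmodel : |2 * (inner ℝ (F x) (mulVecE (Jm - J x) d) : ℝ) + ‖mulVecE Jm d‖ ^ 2|
      ≤ 2 * κbf * κej * θ⁻¹ * ‖d‖ + κbmj ^ 2 * ‖d‖ ^ 2 := by
    have e3 : |(inner ℝ (F x) (mulVecE (Jm - J x) d) : ℝ)| ≤ κbf * (κej / θ * ‖d‖) := by
      calc |(inner ℝ (F x) (mulVecE (Jm - J x) d) : ℝ)|
          ≤ ‖F x‖ * ‖mulVecE (Jm - J x) d‖ := abs_real_inner_le_norm _ _
        _ ≤ κbf * (κej / θ * ‖d‖) := by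
            apply mul_le_mul (hFb x) (mulVecE_norm_le _ hJmacc d) (norm_nonneg _) hκbf
    have e4 : ‖mulVecE Jm d‖ ^ 2 ≤ κbmj ^ 2 * ‖d‖ ^ 2 := by
      have := mulVecE_norm_le Jm hJmb d
      nlinarith [norm_nonneg (mulVecE Jm d)]
    have habs : |2 * (inner ℝ (F x) (mulVecE (Jm - J x) d) : ℝ) + ‖mulVecE Jm d‖ ^ 2|
        ≤ 2 * |(inner ℝ (F x) (mulVecE (Jm - J x) d) : ℝ)| + ‖mulVecE Jm d‖ ^ 2 := by
      have := abs_add_le (2 * (inner ℝ (F x) (mulVecE (Jm - J x) d) : ℝ)) (‖mulVecE Jm d‖ ^ 2)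
      rw [abs_mul, abs_two] at this
      have h2 : |‖mulVecE Jm d‖ ^ 2| = ‖mulVecE Jm d‖ ^ 2 := abs_of_nonneg (by positivity)
      linarith [this, h2.le]
    have hdiv : κbf * (κej / θ * ‖d‖) = κbf * κej * θ⁻¹ * ‖d‖ := by
      field_simp
    calc |2 * (inner ℝ (F x) (mulVecE (Jm - J x) d) : ℝ) + ‖mulVecE Jm d‖ ^ 2|
        ≤ 2 * |(inner ℝ (F x) (mulVecE (Jm - J x) d) : ℝ)| + ‖mulVecE Jm d‖ ^ 2 := habs
      _ ≤ 2 * (κbf * (κej / θ * ‖d‖)) + κbmj ^ 2 * ‖d‖ ^ 2 := by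
          gcongr
      _ = 2 * κbf * κej * θ⁻¹ * ‖d‖ + κbmj ^ 2 * ‖d‖ ^ 2 := by rw [hdiv]; ring
  -- combine
  have hsplit : ‖F x + mulVecE Jm d‖ ^ 2 - ‖F (x + d)‖ ^ 2
      = (2 * (inner ℝ (F x) (mulVecE (Jm - J x) d) : ℝ) + ‖mulVecE Jm d‖ ^ 2)
        - (‖F (x + d)‖ ^ 2 - ‖F x‖ ^ 2 - g' 0) := by
    rw [hexp, hg'0, mulVecE_sub, inner_sub_right]
    ring
  rw [hsplit]
  calc |_ - _| ≤ |2 * (inner ℝ (F x) (mulVecE (Jm - J x) d) : ℝ) + ‖mulVecE Jm d‖ ^ 2|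
        + |‖F (x + d)‖ ^ 2 - ‖F x‖ ^ 2 - g' 0| := abs_sub _ _
    _ ≤ (2 * κbf * κej * θ⁻¹ * ‖d‖ + κbmj ^ 2 * ‖d‖ ^ 2) + C := add_le_add hmodel hT
    _ = (κlj * κbf + κlf ^ 2) * ‖d‖ ^ 2 + 2 * κbf * κej * θ⁻¹ * ‖d‖ + κbmj ^ 2 * ‖d‖ ^ 2 := by
        rw [hCdef]; ring
end

section
/- Let J ∈ ℝ^{m×n} with J ≠ 0, F ∈ ℝᵐ, λ > 0, and let d be the LM step, i.e., the unique solution of (JᵀJ + λI)d = −JᵀF. Then ‖F‖² − ‖F + Jd‖² ≥ ‖JᵀF‖ · min{ ‖d‖, ‖JᵀF‖/‖JᵀJ‖ }. -/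
open Filter Matrix MeasureTheory

open scoped RealInnerProductSpace

noncomputable def toECLM {p n : ℕ} (A : Matrix (Fin p) (Fin n) ℝ) :
    EuclideanSpace ℝ (Fin n) →L[ℝ] EuclideanSpace ℝ (Fin p) :=
  LinearMap.toContinuousLinearMap (Matrix.toEuclideanLin A)

lemma mulVecE_eq {p n : ℕ} (A : Matrix (Fin p) (Fin n) ℝ) (x : EuclideanSpace ℝ (Fin n)) :
    mulVecE A x = toECLM A x := rfl

lemma opNorm_eq {p n : ℕ} (A : Matrix (Fin p) (Fin n) ℝ) : opNorm A = ‖toECLM A‖ := by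
  rw [← (toECLM A).sSup_unitClosedBall_eq_norm]
  have : {r : ℝ | ∃ x : EuclideanSpace ℝ (Fin n), ‖x‖ ≤ 1 ∧ r = ‖mulVecE A x‖}
      = (fun x => ‖toECLM A x‖) '' Metric.closedBall 0 1 := by
    ext r
    simp only [Set.mem_setOf_eq, Set.mem_image, Metric.mem_closedBall, dist_zero_right,
      mulVecE_eq, eq_comm]
  rw [opNorm, this]

lemma le_opNorm' {p n : ℕ} (A : Matrix (Fin p) (Fin n) ℝ) (x : EuclideanSpace ℝ (Fin n)) :
    ‖mulVecE A x‖ ≤ opNorm A * ‖x‖ := by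
  rw [opNorm_eq, mulVecE_eq]; exact (toECLM A).le_opNorm x

lemma inner_mulVecE {p n : ℕ} (A : Matrix (Fin p) (Fin n) ℝ)
    (x : EuclideanSpace ℝ (Fin p)) (y : EuclideanSpace ℝ (Fin n)) :
    ⟪x, mulVecE A y⟫ = ⟪mulVecE Aᵀ x, y⟫ := by
  simp only [mulVecE, PiLp.inner_apply, RCLike.inner_apply, conj_trivial,
    WithLp.equiv_symm_apply, PiLp.toLp_apply, WithLp.equiv_apply, Matrix.mulVec, dotProduct, Matrix.transpose_apply,
    Finset.mul_sum, Finset.sum_mul]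
  rw [Finset.sum_comm]
  congr 1; ext i; congr 1; ext j; ring

lemma opNorm_pos {n m : ℕ} (J : Matrix (Fin m) (Fin n) ℝ) (hJ : J ≠ 0) :
    0 < opNorm (Jᵀ * J) := by
  rw [opNorm_eq]
  rw [norm_pos_iff]
  intro h
  apply hJ
  rw [← Matrix.conjTranspose_mul_self_eq_zero (A := J)]
  have h2 : Matrix.toEuclideanLin (Jᴴ * J) = 0 := by
    have hJT : Jᴴ = Jᵀ := by
      ext i j; simp [Matrix.conjTranspose_apply]
    rw [hJT]
    refine LinearMap.ext fun x => ?_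
    have := congrArg (fun f => f x) (congrArg ContinuousLinearMap.toLinearMap h)
    simpa [toECLM] using this
  exact (map_eq_zero_iff _ (Matrix.toEuclideanLin (𝕜 := ℝ)).injective).mp h2

lemma mulVecE_mul {p q n : ℕ} (A : Matrix (Fin p) (Fin q) ℝ) (B : Matrix (Fin q) (Fin n) ℝ)
    (x : EuclideanSpace ℝ (Fin n)) :
    mulVecE (A * B) x = mulVecE A (mulVecE B x) := by
  simp [mulVecE, Matrix.mulVec_mulVec]

open scoped MatrixOrder in
lemma psd_key {n : ℕ} (M : Matrix (Fin n) (Fin n) ℝ) (hM : M.PosSemidef) (K : ℝ)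
    (hK : ∀ x, ‖mulVecE M x‖ ≤ K * ‖x‖) (x : EuclideanSpace ℝ (Fin n)) :
    ‖mulVecE M x‖ ^ 2 ≤ K * ⟪x, mulVecE M x⟫ := by
  set S := CFC.sqrt M with hS
  have hherm := (Matrix.nonneg_iff_posSemidef.mp (CFC.sqrt_nonneg M)).1
  have hsym : Sᵀ = S := by
    ext i j
    simpa [Matrix.conjTranspose_apply] using congrFun (congrFun hherm i) j
  have hSS : ∀ y, mulVecE M y = mulVecE S (mulVecE S y) := by
    intro y; rw [← mulVecE_mul, CFC.sqrt_mul_sqrt_self M hM.nonneg]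
  have hadj : ∀ (a b : EuclideanSpace ℝ (Fin n)), ⟪mulVecE S a, b⟫ = ⟪a, mulVecE S b⟫ := by
    intro a b
    rw [real_inner_comm, inner_mulVecE, hsym, real_inner_comm]
  have h1 : ∀ y, ‖mulVecE S y‖ ^ 2 = ⟪y, mulVecE M y⟫ := by
    intro y
    rw [← real_inner_self_eq_norm_sq, hSS, hadj]
  have h2 : ‖mulVecE M x‖ ^ 2 = ⟪mulVecE S x, mulVecE M (mulVecE S x)⟫ := by
    rw [← real_inner_self_eq_norm_sq, hSS x, hadj, ← hSS]
  calc ‖mulVecE M x‖ ^ 2 = ⟪mulVecE S x, mulVecE M (mulVecE S x)⟫ := h2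
    _ ≤ ‖mulVecE S x‖ * ‖mulVecE M (mulVecE S x)‖ := real_inner_le_norm _ _
    _ ≤ ‖mulVecE S x‖ * (K * ‖mulVecE S x‖) := by
        refine mul_le_mul_of_nonneg_left (hK _) (norm_nonneg _)
    _ = K * ‖mulVecE S x‖ ^ 2 := by ring
    _ = K * ⟪x, mulVecE M x⟫ := by rw [h1]

/-- Cauchy-type decrease of the LM step (Powell):
`‖F‖² − ‖F + Jd‖² ≥ ‖JᵀF‖ · min{‖d‖, ‖JᵀF‖/‖JᵀJ‖}`. -/
theorem lm_step_cauchy_decrease {m n : ℕ}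
    (J : Matrix (Fin m) (Fin n) ℝ) (hJ : J ≠ 0)
    (F : EuclideanSpace ℝ (Fin m))
    (lm : ℝ) (hlm : 0 < lm)
    (d : EuclideanSpace ℝ (Fin n))
    (hd : (Jᵀ * J + lm • (1 : Matrix (Fin n) (Fin n) ℝ)).mulVec d
      = -(Jᵀ.mulVec F)) :
    ‖F‖ ^ 2 - ‖F + mulVecE J d‖ ^ 2 ≥
      ‖mulVecE Jᵀ F‖ * min ‖d‖ (‖mulVecE Jᵀ F‖ / opNorm (Jᵀ * J)) := by
  set B := Jᵀ * J with hBdef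
  set M := B + lm • (1 : Matrix (Fin n) (Fin n) ℝ) with hMdef
  set g := mulVecE Jᵀ F with hgdef
  set N := opNorm B with hNdef
  have hN0 : 0 < N := by rw [hNdef, hBdef]; exact opNorm_pos J hJ
  have hJT : Jᴴ = Jᵀ := by ext i j; simp [Matrix.conjTranspose_apply]
  have hBpsd : B.PosSemidef := by
    have := Matrix.posSemidef_conjTranspose_mul_self (R := ℝ) J
    rwa [hJT] at this
  have hIpsd : (lm • (1 : Matrix (Fin n) (Fin n) ℝ)).PosSemidef := by
    rw [Matrix.posSemidef_iff_dotProduct_mulVec]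
    constructor
    · ext i j
      by_cases h : i = j <;>
        simp [Matrix.conjTranspose_apply, Matrix.one_apply, h, Ne.symm, eq_comm]
    · intro x
      simp only [Matrix.smul_mulVec, Matrix.one_mulVec, dotProduct_smul]
      have : (0:ℝ) ≤ dotProduct (star x) x := by
        simpa using dotProduct_star_self_nonneg x
      exact smul_nonneg hlm.le this
  have hMpsd : M.PosSemidef := hBpsd.add hIpsd
  have hMd : mulVecE M d = -g := by
    exact congrArg (WithLp.equiv 2 (Fin n → ℝ)).symm hd
  have hF : ⟪F, mulVecE J d⟫ = ⟪g, d⟫ := inner_mulVecE J F d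
  have hsplit : ∀ x : EuclideanSpace ℝ (Fin n), mulVecE M x = mulVecE B x + lm • x := by
    intro x
    show (WithLp.equiv 2 (Fin n → ℝ)).symm (M.mulVec _) = _
    rw [hMdef, Matrix.add_mulVec, Matrix.smul_mulVec, Matrix.one_mulVec]
    rfl
  have hB' : mulVecE B d = mulVecE M d - lm • d := by rw [hsplit d]; abel
  have h1 : ‖mulVecE J d‖ ^ 2 = ⟪mulVecE B d, d⟫ := by
    rw [← real_inner_self_eq_norm_sq, real_inner_comm, inner_mulVecE, ← mulVecE_mul, hBdef]
  have hbd : ∀ x : EuclideanSpace ℝ (Fin n), ‖mulVecE M x‖ ≤ (N + lm) * ‖x‖ := by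
    intro x
    rw [hsplit]
    calc ‖mulVecE B x + lm • x‖ ≤ ‖mulVecE B x‖ + ‖lm • x‖ := norm_add_le _ _
      _ ≤ N * ‖x‖ + lm * ‖x‖ := by
          have h1 := le_opNorm' B x
          have h2 : ‖lm • x‖ = lm * ‖x‖ := by
            rw [norm_smul, Real.norm_eq_abs, abs_of_pos hlm]
          rw [hNdef]
          linarith
      _ = (N + lm) * ‖x‖ := by ring
  obtain ⟨Q, hQdef⟩ : ∃ Q : ℝ, Q = ⟪d, mulVecE M d⟫ := ⟨_, rfl⟩
  have key1 : ‖g‖ ^ 2 ≤ (N + lm) * Q := by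
    have h := psd_key M hMpsd (N + lm) hbd d
    rw [← hQdef] at h
    rwa [hMd, norm_neg] at h
  have key2 : ‖g‖ ≤ (N + lm) * ‖d‖ := by
    have h := hbd d
    rwa [hMd, norm_neg] at h
  have hgd : ⟪g, d⟫ = -Q := by
    rw [hQdef, hMd, inner_neg_right, neg_neg, real_inner_comm]
  have hJd2 : ‖mulVecE J d‖ ^ 2 = Q - lm * ‖d‖ ^ 2 := by
    rw [h1, hB', hMd, inner_sub_left, inner_neg_left, hgd,
      inner_smul_left, real_inner_self_eq_norm_sq]
    simp
  have hdec : ‖F‖ ^ 2 - ‖F + mulVecE J d‖ ^ 2 = Q + lm * ‖d‖ ^ 2 := by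
    rw [norm_add_sq_real, hF, hgd, hJd2]
    ring
  clear_value N g
  clear hd hMd hF hgd hB' h1 hbd hsplit hQdef
  rw [ge_iff_le, hdec]
  have hg0 : (0:ℝ) ≤ ‖g‖ := norm_nonneg g
  have hd0 : (0:ℝ) ≤ ‖d‖ := norm_nonneg d
  have hNlm : (0:ℝ) < N + lm := by linarith
  rcases le_total ‖d‖ (‖g‖ / N) with hmin | hmin
  · rw [min_eq_left hmin]
    have h3 : N * ‖d‖ ≤ ‖g‖ := by
      have := (le_div_iff₀ hN0).mp hmin
      linarith
    have h1' : 0 ≤ ‖g‖ * (‖g‖ - N * ‖d‖) := mul_nonneg hg0 (by linarith)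
    have h2' : 0 ≤ lm * ‖d‖ * ((N + lm) * ‖d‖ - ‖g‖) :=
      mul_nonneg (mul_nonneg hlm.le hd0) (by linarith)
    have hfin : (N + lm) * (‖g‖ * ‖d‖) ≤ (N + lm) * (Q + lm * ‖d‖ ^ 2) := by
      nlinarith [key1, h1', h2']
    exact le_of_mul_le_mul_left hfin hNlm
  · rw [min_eq_right hmin]
    have h3 : ‖g‖ ≤ N * ‖d‖ := by
      have := (div_le_iff₀ hN0).mp hmin
      linarith
    have hgoal : ‖g‖ * (‖g‖ / N) = ‖g‖ ^ 2 / N := by ring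
    rw [hgoal, div_le_iff₀ hN0]
    have e1 : N * (‖g‖ ^ 2) ≤ N * ((N + lm) * Q) := mul_le_mul_of_nonneg_left key1 hN0.le
    have e2 : lm * ‖g‖ ^ 2 ≤ lm * (N * ‖d‖) ^ 2 := by
      have : ‖g‖ ^ 2 ≤ (N * ‖d‖) ^ 2 := by nlinarith
      exact mul_le_mul_of_nonneg_left this hlm.le
    have e3 : (0:ℝ) ≤ lm ^ 2 * N * ‖d‖ ^ 2 := by positivity
    have hfin : (N + lm) * (‖g‖ ^ 2) ≤ (N + lm) * ((Q + lm * ‖d‖ ^ 2) * N) := by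
      nlinarith [e1, e2, e3]
    exact le_of_mul_le_mul_left hfin hNlm
end
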